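/- Let φ_n(t) = exp((n-2)√t/(n+√t)) for integers n ≥ 2 and φ_0(t) = φ_1(t) = 1. For every integer n ≥ 1 and every t ≥ 0, Σ_{k=1}^n C(n,k)^{-1} φ_{n-k}(t) φ_k(t)/φ_n(t) ≤ 5/3, where C(n,k) is the binomial coefficient. -/

import Mathlib

noncomputable def phi (n : ℕ) (t : ℝ) : ℝ :=
  if n ≤ 1 then 1 else Real.exp (((n : ℝ) - 2) * Real.sqrt t / ((n : ℝ) + Real.sqrt t))

open Finset

noncomputable def hfun (s : ℝ) (j : ℕ) : ℝ :=
  if j ≤ 1 then 0 else ((j : ℝ) - 2) * s / ((j : ℝ) + s)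

lemma phi_eq (j : ℕ) (t : ℝ) : phi j t = Real.exp (hfun (Real.sqrt t) j) := by
  unfold phi hfun; split <;> simp

lemma hfun_nonneg {s : ℝ} (hs : 0 ≤ s) (j : ℕ) : 0 ≤ hfun s j := by
  unfold hfun
  split
  · exact le_refl _
  · rename_i hj
    have h2 : (2 : ℝ) ≤ (j : ℝ) := by exact_mod_cast by omega
    have hd : (0:ℝ) < (j : ℝ) + s := by linarith
    exact div_nonneg (mul_nonneg (by linarith) hs) hd.le

example : True := trivial

lemma hfun_mono {s : ℝ} (hs : 0 ≤ s) {a b : ℕ} (hab : a ≤ b) : hfun s a ≤ hfun s b := by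
  by_cases ha : a ≤ 1
  · rw [show hfun s a = 0 from if_pos ha]; exact hfun_nonneg hs b
  · have hb : ¬ b ≤ 1 := by omega
    rw [show hfun s a = ((a : ℝ) - 2) * s / ((a : ℝ) + s) from if_neg ha,
        show hfun s b = ((b : ℝ) - 2) * s / ((b : ℝ) + s) from if_neg hb]
    have h2a : (2 : ℝ) ≤ (a : ℝ) := by exact_mod_cast by omega
    have hab' : (a : ℝ) ≤ (b : ℝ) := by exact_mod_cast hab
    have hda : (0:ℝ) < (a : ℝ) + s := by linarith
    have hdb : (0:ℝ) < (b : ℝ) + s := by linarith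
    rw [div_le_div_iff₀ hda hdb]
    nlinarith [mul_nonneg (mul_nonneg (sub_nonneg.2 hab') hs) hs,
      mul_nonneg (sub_nonneg.2 hab') hs]

lemma hfun_le {s : ℝ} (hs : 0 ≤ s) (j : ℕ) : hfun s j ≤ ((j - 2 : ℕ) : ℝ) := by
  by_cases hj : j ≤ 1
  · rw [show hfun s j = 0 from if_pos hj]; positivity
  · rw [show hfun s j = ((j : ℝ) - 2) * s / ((j : ℝ) + s) from if_neg hj]
    have h2 : (2 : ℝ) ≤ (j : ℝ) := by exact_mod_cast by omega
    have hd : (0:ℝ) < (j : ℝ) + s := by linarith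
    have : ((j - 2 : ℕ) : ℝ) = (j : ℝ) - 2 := by
      have : 2 ≤ j := by omega
      push_cast [this]; ring
    rw [this, div_le_iff₀ hd]
    nlinarith

lemma term_le (n k : ℕ) (hk : k ≤ n) (t : ℝ) (ht : 0 ≤ t) :
    phi (n - k) t * phi k t / phi n t ≤ (3 : ℝ) ^ (min k (n - k) - 2) := by
  rw [phi_eq, phi_eq, phi_eq, ← Real.exp_add, ← Real.exp_sub]
  set s := Real.sqrt t with hs_def
  have hs : 0 ≤ s := Real.sqrt_nonneg t
  set e := min k (n - k) - 2 with he_def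
  have hx : hfun s (n - k) + hfun s k - hfun s n ≤ (e : ℝ) := by
    have h1 := hfun_mono hs (Nat.sub_le n k)
    have h2 := hfun_mono hs hk
    have l1 := hfun_le hs k
    have l2 := hfun_le hs (n - k)
    have hnn := hfun_nonneg hs (n - k)
    have hnk := hfun_nonneg hs k
    have he : (e:ℝ) = min (((k - 2 : ℕ)) : ℝ) (((n - k - 2 : ℕ)) : ℝ) := by
      rw [← Nat.cast_min]
      congr 1
      omega
    rw [he, le_min_iff]
    constructor <;> linarith
  calc Real.exp (hfun s (n - k) + hfun s k - hfun s n) ≤ Real.exp (e : ℝ) :=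
        Real.exp_le_exp.2 hx
    _ = Real.exp 1 ^ e := by rw [← Real.exp_nat_mul]; norm_num
    _ ≤ 3 ^ e := by
        apply pow_le_pow_left₀ (Real.exp_pos 1).le
        have := Real.exp_one_lt_d9
        linarith


noncomputable def tt (j : ℕ) : ℝ := 3 ^ (j - 2) / (((2 * j).choose j : ℕ) : ℝ)

noncomputable def UU (j : ℕ) : ℝ :=
  if j ≤ 10 then 3 ^ (j - 2) / (((30).choose j : ℕ) : ℝ) else tt j

lemma tt_pos (j : ℕ) : 0 < tt j := by
  unfold tt
  apply div_pos (by positivity)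
  exact_mod_cast Nat.choose_pos (by omega)

lemma UU_nonneg (j : ℕ) : 0 ≤ UU j := by
  unfold UU
  split
  · apply div_nonneg (by positivity)
    positivity
  · exact (tt_pos j).le

lemma natkey (i : ℕ) : 15 * Nat.choose (2 * i + 14) (i + 7) ≤ 4 * Nat.choose (2 * i + 16) (i + 8) := by
  have hc : (i + 8) * Nat.choose (2 * i + 16) (i + 8)
      = 2 * (2 * (i + 7) + 1) * Nat.choose (2 * i + 14) (i + 7) := by
    have := Nat.succ_mul_centralBinom_succ (i + 7)
    simpa [Nat.centralBinom, show 2 * (i + 7) = 2 * i + 14 by ring,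
      show 2 * (i + 8) = 2 * i + 16 by ring, show i + 7 + 1 = i + 8 by ring] using this
  have h2 : (i + 8) * (15 * Nat.choose (2 * i + 14) (i + 7))
      ≤ (i + 8) * (4 * Nat.choose (2 * i + 16) (i + 8)) := by
    have h3 : (i + 8) * (4 * Nat.choose (2 * i + 16) (i + 8))
        = (16 * i + 120) * Nat.choose (2 * i + 14) (i + 7) := by
      rw [show (i + 8) * (4 * Nat.choose (2 * i + 16) (i + 8))
          = 4 * ((i + 8) * Nat.choose (2 * i + 16) (i + 8)) by ring, hc]
      ring
    rw [h3, show (i + 8) * (15 * Nat.choose (2 * i + 14) (i + 7))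
        = (15 * i + 120) * Nat.choose (2 * i + 14) (i + 7) by ring]
    exact Nat.mul_le_mul_right _ (by omega)
  exact Nat.le_of_mul_le_mul_left h2 (by omega)

lemma ratio {j : ℕ} (hj : 7 ≤ j) : 5 * tt (j + 1) ≤ 4 * tt j := by
  obtain ⟨i, rfl⟩ : ∃ i, j = i + 7 := ⟨j - 7, by omega⟩
  unfold tt
  have hp1 : (0:ℝ) < (((2 * (i + 7 + 1)).choose (i + 7 + 1) : ℕ) : ℝ) := by
    exact_mod_cast Nat.choose_pos (by omega)
  have hp2 : (0:ℝ) < (((2 * (i + 7)).choose (i + 7) : ℕ) : ℝ) := by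
    exact_mod_cast Nat.choose_pos (by omega)
  rw [mul_div_assoc', mul_div_assoc', div_le_div_iff₀ hp1 hp2]
  have key := natkey i
  have : (5 * 3 ^ (i + 7 + 1 - 2) * ((2 * (i + 7)).choose (i + 7)) : ℕ)
      ≤ (4 * 3 ^ (i + 7 - 2) * ((2 * (i + 7 + 1)).choose (i + 7 + 1)) : ℕ) := by
    have e1 : i + 7 + 1 - 2 = i + 6 := by omega
    have e2 : i + 7 - 2 = i + 5 := by omega
    rw [e1, e2, show 2 * (i + 7) = 2 * i + 14 by ring,
      show 2 * (i + 7 + 1) = 2 * i + 16 by ring,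
      show i + 7 + 1 = i + 8 by ring]
    calc 5 * 3 ^ (i + 6) * Nat.choose (2 * i + 14) (i + 7)
        = 3 ^ (i + 5) * (15 * Nat.choose (2 * i + 14) (i + 7)) := by ring
      _ ≤ 3 ^ (i + 5) * (4 * Nat.choose (2 * i + 16) (i + 8)) :=
          Nat.mul_le_mul_left _ key
      _ = 4 * 3 ^ (i + 5) * Nat.choose (2 * i + 16) (i + 8) := by ring
  exact_mod_cast this

lemma geo : ∀ m, 10 ≤ m → (∑ j ∈ Ioc 10 m, tt j) ≤ 5 * tt 11 - 5 * tt (m + 1) := by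
  intro m hm
  induction m, hm using Nat.le_induction with
  | base => simp
  | succ m hm ih =>
    rw [Finset.sum_Ioc_succ_top (by omega)]
    have hr : 5 * tt (m + 2) ≤ 4 * tt (m + 1) := ratio (by omega)
    linarith


lemma conv (n : ℕ) (hn : 1 ≤ n)
    (h : 3 * (∑ k ∈ Icc 1 n, 3 ^ (min k (n - k) - 2) * (k.factorial * (n - k).factorial))
      ≤ 5 * n.factorial) :
    (∑ k ∈ Icc 1 n, ((n.choose k : ℝ))⁻¹ * 3 ^ (min k (n - k) - 2)) ≤ 5 / 3 := by
  have hfac : (0:ℝ) < (n.factorial : ℝ) := by exact_mod_cast n.factorial_pos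
  have hsum : (∑ k ∈ Icc 1 n, ((n.choose k : ℝ))⁻¹ * 3 ^ (min k (n - k) - 2))
      = ((∑ k ∈ Icc 1 n, 3 ^ (min k (n - k) - 2) * (k.factorial * (n - k).factorial) : ℕ) : ℝ)
        / (n.factorial : ℝ) := by
    push_cast
    rw [Finset.sum_div]
    apply Finset.sum_congr rfl
    intro k hk
    have hkn : k ≤ n := (Finset.mem_Icc.1 hk).2
    have key : ((n.choose k : ℝ)) * ((k.factorial : ℝ) * ((n - k).factorial : ℝ))
        = (n.factorial : ℝ) := by
      exact_mod_cast congrArg (Nat.cast (R := ℝ))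
        (by rw [← Nat.choose_mul_factorial_mul_factorial hkn]; ring)
    have hc : ((n.choose k : ℝ)) ≠ 0 := by
      exact_mod_cast (Nat.choose_pos hkn).ne'
    field_simp
    linear_combination (-1 : ℝ) * key
  rw [hsum, div_le_div_iff₀ hfac (by norm_num : (0:ℝ) < 3), mul_comm]
  exact_mod_cast h

lemma small (n : ℕ) (hn : 1 ≤ n) (hn' : n ≤ 29) :
    3 * (∑ k ∈ Icc 1 n, 3 ^ (min k (n - k) - 2) * (k.factorial * (n - k).factorial))
      ≤ 5 * n.factorial := by
  interval_cases n <;> decide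

lemma claimA (m k : ℕ) (hk : k ∈ Ioc 2 (m + 27)) :
    (((m + 30).choose k : ℝ))⁻¹ * 3 ^ (min k (m + 30 - k) - 2)
      ≤ UU k + UU (m + 30 - k) := by
  rw [Finset.mem_Ioc] at hk
  set n := m + 30 with hn
  have hk3 : 3 ≤ k := by omega
  have hkn : k ≤ n - 3 := by omega
  set j := min k (n - k) with hj
  have hj3 : 3 ≤ j := by omega
  have h2j : 2 * j ≤ n := by omega
  have hch : n.choose k = n.choose j := by
    rcases le_total k (n - k) with h | h
    · rw [show j = k by omega]
    · rw [show j = n - k by omega, Nat.choose_symm (by omega : k ≤ n)]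
  have hUj : ((n.choose k : ℝ))⁻¹ * 3 ^ (j - 2) ≤ UU j := by
    rw [hch]
    have hrw : ((n.choose j : ℝ))⁻¹ * 3 ^ (j - 2) = 3 ^ (j - 2) / ((n.choose j : ℕ) : ℝ) := by
      ring
    rw [hrw]
    by_cases hj10 : j ≤ 10
    · rw [show UU j = 3 ^ (j - 2) / (((30).choose j : ℕ) : ℝ) by unfold UU; rw [if_pos hj10]]
      have hp : (0:ℝ) < (((30).choose j : ℕ) : ℝ) := by
        exact_mod_cast Nat.choose_pos (by omega)
      apply div_le_div_of_nonneg_left (by positivity) hp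
      exact_mod_cast Nat.choose_le_choose j (by omega : 30 ≤ n)
    · rw [show UU j = tt j by unfold UU; rw [if_neg hj10]]
      unfold tt
      have hp : (0:ℝ) < (((2 * j).choose j : ℕ) : ℝ) := by
        exact_mod_cast Nat.choose_pos (by omega)
      apply div_le_div_of_nonneg_left (by positivity) hp
      exact_mod_cast Nat.choose_le_choose j h2j
  refine hUj.trans ?_
  rcases le_total k (n - k) with h | h
  · rw [show j = k by omega]; exact le_add_of_nonneg_right (UU_nonneg _)
  · rw [show j = n - k by omega]; exact le_add_of_nonneg_left (UU_nonneg _)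

lemma c302 : Nat.choose 30 2 = 435 := by decide
lemma c303 : Nat.choose 30 3 = 4060 := by
  rw [Nat.choose_eq_factorial_div_factorial (by norm_num)]; decide
lemma c304 : Nat.choose 30 4 = 27405 := by
  rw [Nat.choose_eq_factorial_div_factorial (by norm_num)]; decide
lemma c305 : Nat.choose 30 5 = 142506 := by
  rw [Nat.choose_eq_factorial_div_factorial (by norm_num)]; decide
lemma c306 : Nat.choose 30 6 = 593775 := by
  rw [Nat.choose_eq_factorial_div_factorial (by norm_num)]; decide
lemma c307 : Nat.choose 30 7 = 2035800 := by
  rw [Nat.choose_eq_factorial_div_factorial (by norm_num)]; decide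
lemma c308 : Nat.choose 30 8 = 5852925 := by
  rw [Nat.choose_eq_factorial_div_factorial (by norm_num)]; decide
lemma c309 : Nat.choose 30 9 = 14307150 := by
  rw [Nat.choose_eq_factorial_div_factorial (by norm_num)]; decide
lemma c3010 : Nat.choose 30 10 = 30045015 := by
  rw [Nat.choose_eq_factorial_div_factorial (by norm_num)]; decide
lemma c2211 : Nat.choose 22 11 = 705432 := by
  rw [Nat.choose_eq_factorial_div_factorial (by norm_num)]; decide

lemma P1val : ∑ j ∈ Ioc 2 10, UU j
    = 3/4060 + (9/27405 + (27/142506 + (81/593775 + (243/2035800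
      + (729/5852925 + (2187/14307150 + 6561/30045015)))))) := by
  rw [show Finset.Ioc 2 10 = ({3,4,5,6,7,8,9,10} : Finset ℕ) by decide]
  rw [Finset.sum_insert (by decide), Finset.sum_insert (by decide),
    Finset.sum_insert (by decide), Finset.sum_insert (by decide),
    Finset.sum_insert (by decide), Finset.sum_insert (by decide),
    Finset.sum_insert (by decide), Finset.sum_singleton]
  norm_num [UU, c303, c304, c305, c306, c307, c308, c309, c3010]

lemma tt11val : tt 11 = 19683 / 705432 := by
  norm_num [tt, c2211]

lemma geo' : ∀ m, 10 ≤ m → (∑ j ∈ Ioc 10 m, tt j) ≤ 5 * tt 11 := by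
  intro m hm
  have := geo m hm
  have := (tt_pos (m + 1)).le
  linarith

lemma large (m : ℕ) :
    (∑ k ∈ Icc 1 (m + 30), (((m + 30).choose k : ℝ))⁻¹ * 3 ^ (min k (m + 30 - k) - 2))
      ≤ 5 / 3 := by
  have hIcc : Finset.Icc 1 (m + 30) = Finset.Ioc 0 (m + 30) := Finset.Icc_add_one_left_eq_Ioc 0 (m + 30)
  rw [hIcc]
  rw [← Finset.sum_Ioc_consecutive _ (by omega : (0:ℕ) ≤ 2) (by omega : 2 ≤ m + 30)]
  rw [← Finset.sum_Ioc_consecutive _ (by omega : (2:ℕ) ≤ m + 27) (by omega : m + 27 ≤ m + 30)]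
  have hA : (∑ k ∈ Ioc 0 2, (((m + 30).choose k : ℝ))⁻¹ * 3 ^ (min k (m + 30 - k) - 2))
      ≤ 1/30 + 1/435 := by
    rw [show Finset.Ioc 0 2 = ({1, 2} : Finset ℕ) by decide,
      Finset.sum_insert (by decide), Finset.sum_singleton]
    have e1 : min 1 (m + 30 - 1) - 2 = 0 := by omega
    have e2 : min 2 (m + 30 - 2) - 2 = 0 := by omega
    rw [e1, e2, pow_zero, mul_one, Nat.choose_one_right]
    have h1 : ((m + 30 : ℕ) : ℝ)⁻¹ ≤ 1/30 := by
      rw [show (1:ℝ)/30 = ((30:ℝ))⁻¹ by norm_num]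
      apply inv_anti₀ (by norm_num)
      exact_mod_cast by omega
    have h2 : (((m + 30).choose 2 : ℕ) : ℝ)⁻¹ ≤ 1/435 := by
      rw [show (1:ℝ)/435 = ((435:ℝ))⁻¹ by norm_num]
      apply inv_anti₀ (by norm_num)
      have hcc := Nat.choose_le_choose 2 (by omega : 30 ≤ m + 30)
      rw [c302] at hcc
      exact_mod_cast hcc
    linarith
  have hC : (∑ k ∈ Ioc (m + 27) (m + 30), (((m + 30).choose k : ℝ))⁻¹
        * 3 ^ (min k (m + 30 - k) - 2)) ≤ 1/435 + 1/30 + 1 := by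
    have e1 : Finset.Ioc (m + 27) (m + 30) = {m + 28, m + 29, m + 30} := by
      ext x; simp only [Finset.mem_Ioc, Finset.mem_insert, Finset.mem_singleton]; omega
    rw [e1, Finset.sum_insert (by simp only [Finset.mem_insert, Finset.mem_singleton]; omega), Finset.sum_insert (by simp only [Finset.mem_singleton]; omega),
      Finset.sum_singleton]
    have e28 : min (m + 28) (m + 30 - (m + 28)) - 2 = 0 := by omega
    have e29 : min (m + 29) (m + 30 - (m + 29)) - 2 = 0 := by omega
    have e30 : min (m + 30) (m + 30 - (m + 30)) - 2 = 0 := by omega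
    rw [e28, e29, e30, pow_zero, mul_one]
    have h28 : (((m + 30).choose (m + 28) : ℕ) : ℝ)⁻¹ ≤ 1/435 := by
      rw [show m + 28 = m + 30 - 2 by omega, Nat.choose_symm (by omega : 2 ≤ m + 30)]
      rw [show (1:ℝ)/435 = ((435:ℝ))⁻¹ by norm_num]
      apply inv_anti₀ (by norm_num)
      have hcc := Nat.choose_le_choose 2 (by omega : 30 ≤ m + 30)
      rw [c302] at hcc
      exact_mod_cast hcc
    have h29 : (((m + 30).choose (m + 29) : ℕ) : ℝ)⁻¹ ≤ 1/30 := by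
      rw [show m + 29 = m + 30 - 1 by omega, Nat.choose_symm (by omega : 1 ≤ m + 30),
        Nat.choose_one_right]
      rw [show (1:ℝ)/30 = ((30:ℝ))⁻¹ by norm_num]
      apply inv_anti₀ (by norm_num)
      exact_mod_cast by omega
    have h30 : (((m + 30).choose (m + 30) : ℕ) : ℝ)⁻¹ = 1 := by
      rw [Nat.choose_self]; norm_num
    rw [h30]
    linarith
  have hB : (∑ k ∈ Ioc 2 (m + 27), (((m + 30).choose k : ℝ))⁻¹
        * 3 ^ (min k (m + 30 - k) - 2))
      ≤ 2 * ((∑ j ∈ Ioc 2 10, UU j) + 5 * tt 11) := by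
    calc (∑ k ∈ Ioc 2 (m + 27), (((m + 30).choose k : ℝ))⁻¹ * 3 ^ (min k (m + 30 - k) - 2))
        ≤ ∑ k ∈ Ioc 2 (m + 27), (UU k + UU (m + 30 - k)) :=
          Finset.sum_le_sum (fun k hk => claimA m k hk)
      _ = (∑ k ∈ Ioc 2 (m + 27), UU k) + (∑ k ∈ Ioc 2 (m + 27), UU (m + 30 - k)) :=
          Finset.sum_add_distrib
      _ = (∑ k ∈ Ioc 2 (m + 27), UU k) + (∑ k ∈ Ioc 2 (m + 27), UU k) := by
          congr 1
          apply Finset.sum_nbij' (i := fun k => m + 30 - k) (j := fun k => m + 30 - k)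
          · intro a ha; simp only [Finset.mem_Ioc] at *; omega
          · intro a ha; simp only [Finset.mem_Ioc] at *; omega
          · intro a ha; simp only [Finset.mem_Ioc] at *; omega
          · intro a ha; simp only [Finset.mem_Ioc] at *; omega
          · intro a ha; rfl
      _ = 2 * (∑ k ∈ Ioc 2 (m + 27), UU k) := by ring
      _ ≤ 2 * ((∑ j ∈ Ioc 2 10, UU j) + 5 * tt 11) := by
          have hsplit : (∑ k ∈ Ioc 2 (m + 27), UU k)
              = (∑ j ∈ Ioc 2 10, UU j) + (∑ j ∈ Ioc 10 (m + 27), UU j) := by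
            rw [Finset.sum_Ioc_consecutive _ (by omega : (2:ℕ) ≤ 10) (by omega : 10 ≤ m + 27)]
          have htail : (∑ j ∈ Ioc 10 (m + 27), UU j) ≤ 5 * tt 11 := by
            have : (∑ j ∈ Ioc 10 (m + 27), UU j) = ∑ j ∈ Ioc 10 (m + 27), tt j := by
              apply Finset.sum_congr rfl
              intro j hj
              rw [Finset.mem_Ioc] at hj
              exact if_neg (by omega)
            rw [this]
            exact geo' (m + 27) (by omega)
          rw [hsplit]
          linarith
  rw [P1val] at hB
  rw [tt11val] at hB
  norm_num at hA hB hC ⊢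
  linarith


lemma step2 (n : ℕ) (hn : 1 ≤ n) :
    (∑ k ∈ Icc 1 n, ((n.choose k : ℝ))⁻¹ * 3 ^ (min k (n - k) - 2)) ≤ 5 / 3 := by
  by_cases h : n ≤ 29
  · exact conv n hn (small n hn h)
  · obtain ⟨m, rfl⟩ : ∃ m, n = m + 30 := ⟨n - 30, by omega⟩
    exact large m


theorem phi_convolution_sum_le (n : ℕ) (hn : 1 ≤ n) (t : ℝ) (ht : 0 ≤ t) :
    ∑ k ∈ Finset.Icc 1 n,
      ((n.choose k : ℝ))⁻¹ * (phi (n - k) t * phi k t / phi n t) ≤ 5 / 3 := by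
  have hstep : ∀ k ∈ Icc 1 n,
      ((n.choose k : ℝ))⁻¹ * (phi (n - k) t * phi k t / phi n t)
        ≤ ((n.choose k : ℝ))⁻¹ * 3 ^ (min k (n - k) - 2) := by
    intro k hk
    have hkn : k ≤ n := (Finset.mem_Icc.1 hk).2
    apply mul_le_mul_of_nonneg_left (term_le n k hkn t ht)
    positivity
  exact (Finset.sum_le_sum hstep).trans (step2 n hn)
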